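/- The log-sum-exp function φ(y) = ln(∑ᵢ exp(yᵢ)) on ℝⁿ has gradient with Lipschitz constant 1 with respect to the Euclidean norm: ‖∇φ(y₁) − ∇φ(y₂)‖₂ ≤ ‖y₁ − y₂‖₂ for all y₁, y₂. -/

import Mathlib

open Real Finset

noncomputable def smax13 (n : ℕ) (y : Fin n → ℝ) : Fin n → ℝ :=
  fun i => Real.exp (y i) / ∑ k, Real.exp (y k)

noncomputable def D13 (n : ℕ) (y : Fin n → ℝ) : (Fin n → ℝ) →L[ℝ] (Fin n → ℝ) :=
  ContinuousLinearMap.pi fun i =>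
    smax13 n y i • (ContinuousLinearMap.proj i
      - ∑ k, smax13 n y k • (ContinuousLinearMap.proj k : (Fin n → ℝ) →L[ℝ] ℝ))

lemma sum_exp_pos13 (n : ℕ) (hn : n ≠ 0) (y : Fin n → ℝ) : 0 < ∑ k, Real.exp (y k) := by
  haveI : Nonempty (Fin n) := Fin.pos_iff_nonempty.1 (Nat.pos_of_ne_zero hn)
  exact Finset.sum_pos (fun k _ => Real.exp_pos _) Finset.univ_nonempty

lemma smax13_hasFDerivAt (n : ℕ) (hn : n ≠ 0) (y : Fin n → ℝ) :
    HasFDerivAt (smax13 n) (D13 n y) y := by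
  have hSpos := sum_exp_pos13 n hn y
  have hSne : (∑ k, Real.exp (y k)) ≠ 0 := ne_of_gt hSpos
  rw [hasFDerivAt_pi']
  intro i
  have hexp : ∀ k : Fin n, HasFDerivAt (fun z : Fin n → ℝ => Real.exp (z k))
      (Real.exp (y k) • (ContinuousLinearMap.proj k : (Fin n → ℝ) →L[ℝ] ℝ)) y :=
    fun k => by
      have := (Real.hasDerivAt_exp (y k)).comp_hasFDerivAt y (hasFDerivAt_apply (𝕜 := ℝ) k y)
      exact this
  have hS : HasFDerivAt (fun z : Fin n → ℝ => ∑ k, Real.exp (z k))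
      (∑ k, Real.exp (y k) • (ContinuousLinearMap.proj k : (Fin n → ℝ) →L[ℝ] ℝ)) y :=
    HasFDerivAt.fun_sum fun k _ => hexp k
  have hInv : HasFDerivAt (fun z : Fin n → ℝ => (∑ k, Real.exp (z k))⁻¹)
      ((-((∑ k, Real.exp (y k)) ^ 2)⁻¹) •
        (∑ k, Real.exp (y k) • (ContinuousLinearMap.proj k : (Fin n → ℝ) →L[ℝ] ℝ))) y :=
    (hasDerivAt_inv hSne).comp_hasFDerivAt y hS
  have hmain := (hexp i).mul hInv
  have heq : (fun z : Fin n → ℝ => Real.exp (z i) * (∑ k, Real.exp (z k))⁻¹)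
      = fun z => smax13 n z i := by
    funext z; rw [smax13, div_eq_mul_inv]
  replace hmain : HasFDerivAt (fun z : Fin n → ℝ => Real.exp (z i) * (∑ k, Real.exp (z k))⁻¹) _ y :=
    hmain
  rw [heq] at hmain
  have hEq : (ContinuousLinearMap.proj i).comp (D13 n y)
      = (Real.exp (y i) • ((-((∑ k, Real.exp (y k)) ^ 2)⁻¹) •
          (∑ k, Real.exp (y k) • (ContinuousLinearMap.proj k : (Fin n → ℝ) →L[ℝ] ℝ))) +
        (∑ k, Real.exp (y k))⁻¹ •
          (Real.exp (y i) • (ContinuousLinearMap.proj i : (Fin n → ℝ) →L[ℝ] ℝ))) := by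
    ext v
    simp only [D13, smax13, ContinuousLinearMap.coe_comp', Function.comp_apply,
      ContinuousLinearMap.coe_pi', ContinuousLinearMap.proj_apply,
      ContinuousLinearMap.smul_apply, ContinuousLinearMap.sub_apply,
      ContinuousLinearMap.coe_sum', Finset.sum_apply, ContinuousLinearMap.coe_smul',
      Pi.smul_apply, smul_eq_mul, ContinuousLinearMap.add_apply, ContinuousLinearMap.neg_apply]
    set S := ∑ k, Real.exp (y k) with hs
    have hL : ∑ k, Real.exp (y k) / S * v k = (∑ k, Real.exp (y k) * v k) / S := by
      simp only [div_mul_eq_mul_div]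
      rw [← Finset.sum_div]
    rw [hL]
    set T := ∑ k, Real.exp (y k) * v k
    field_simp
    ring
  rw [hEq]
  exact hmain

lemma key13 (n : ℕ) (hn : n ≠ 0) (y v : Fin n → ℝ) :
    ∑ i, (smax13 n y i * (v i - ∑ k, smax13 n y k * v k)) ^ 2 ≤ ∑ i, v i ^ 2 := by
  set p := smax13 n y with hp
  have hSpos := sum_exp_pos13 n hn y
  have h0 : ∀ i, 0 ≤ p i := fun i => div_nonneg (Real.exp_pos _).le hSpos.le
  have h1 : ∀ i, p i ≤ 1 := by
    intro i
    rw [hp]; show Real.exp (y i) / _ ≤ 1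
    rw [div_le_one hSpos]
    exact Finset.single_le_sum (fun k _ => (Real.exp_pos (y k)).le) (Finset.mem_univ i)
  have hps : ∑ i, p i = 1 := by
    rw [hp]
    show (∑ i, Real.exp (y i) / ∑ k, Real.exp (y k)) = 1
    rw [← Finset.sum_div, div_self (ne_of_gt hSpos)]
  set m := ∑ k, p k * v k with hm
  calc ∑ i, (p i * (v i - m)) ^ 2
      ≤ ∑ i, p i * (v i - m) ^ 2 := by
        apply Finset.sum_le_sum
        intro i _
        have e1 : (p i * (v i - m)) ^ 2 = p i * p i * (v i - m) ^ 2 := by ring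
        rw [e1]
        nlinarith [sq_nonneg (v i - m), h0 i, h1 i,
          mul_nonneg (mul_nonneg (h0 i) (sub_nonneg.2 (h1 i))) (sq_nonneg (v i - m))]
    _ = ∑ i, p i * v i ^ 2 - m ^ 2 := by
        have : ∀ i ∈ Finset.univ, p i * (v i - m) ^ 2
            = p i * v i ^ 2 - 2 * m * (p i * v i) + m ^ 2 * p i := fun i _ => by ring
        rw [Finset.sum_congr rfl this]
        rw [Finset.sum_add_distrib, Finset.sum_sub_distrib, ← Finset.mul_sum, ← Finset.mul_sum,
          ← hm, hps]
        ring
    _ ≤ ∑ i, p i * v i ^ 2 := by nlinarith [sq_nonneg m]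
    _ ≤ ∑ i, v i ^ 2 := by
        apply Finset.sum_le_sum
        intro i _
        nlinarith [sq_nonneg (v i), h0 i, h1 i]

theorem stmt_13 (n : ℕ) (y₁ y₂ : Fin n → ℝ) :
    Real.sqrt (∑ i, (Real.exp (y₁ i) / ∑ k, Real.exp (y₁ k) -
        Real.exp (y₂ i) / ∑ k, Real.exp (y₂ k)) ^ 2) ≤
      Real.sqrt (∑ i, (y₁ i - y₂ i) ^ 2) := by
  rcases Nat.eq_zero_or_pos n with rfl | hn
  · simp
  have hn' : n ≠ 0 := hn.ne'
  set e := EuclideanSpace.equiv (Fin n) ℝ with he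
  set F : EuclideanSpace ℝ (Fin n) → EuclideanSpace ℝ (Fin n) :=
    fun x => e.symm (smax13 n (e x)) with hF
  set A : EuclideanSpace ℝ (Fin n) → EuclideanSpace ℝ (Fin n) →L[ℝ] EuclideanSpace ℝ (Fin n) :=
    fun x => (e.symm.toContinuousLinearMap.comp (D13 n (e x))).comp e.toContinuousLinearMap
    with hA
  have hAapp : ∀ (x v : EuclideanSpace ℝ (Fin n)) (i : Fin n),
      A x v i = smax13 n (e x) i * (v i - ∑ k, smax13 n (e x) k * v k) := by
    intro x v i
    simp only [hA, ContinuousLinearMap.coe_comp', Function.comp_apply,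
      ContinuousLinearEquiv.coe_coe]
    have hsymm : ∀ w : Fin n → ℝ, (e.symm w : EuclideanSpace ℝ (Fin n)) i = w i := fun _ => rfl
    rw [hsymm]
    simp only [D13, ContinuousLinearMap.pi_apply, ContinuousLinearMap.smul_apply,
      ContinuousLinearMap.sub_apply, ContinuousLinearMap.proj_apply,
      ContinuousLinearMap.coe_sum', Finset.sum_apply, ContinuousLinearMap.coe_smul',
      Pi.smul_apply, smul_eq_mul]
    rfl
  have hderiv : ∀ x, HasFDerivAt F (A x) x := by
    intro x
    exact (e.symm.toContinuousLinearMap.hasFDerivAt.comp _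
      ((smax13_hasFDerivAt n hn' (e x)).comp x e.toContinuousLinearMap.hasFDerivAt))
  have hbound : ∀ x, ‖A x‖ ≤ 1 := by
    intro x
    apply ContinuousLinearMap.opNorm_le_bound _ zero_le_one
    intro v
    rw [one_mul, EuclideanSpace.norm_eq, EuclideanSpace.norm_eq]
    apply Real.sqrt_le_sqrt
    have := key13 n hn' (e x) (fun i => v i)
    simp only [Real.norm_eq_abs, sq_abs]
    calc ∑ i, (A x v i) ^ 2
        = ∑ i, (smax13 n (e x) i * (v i - ∑ k, smax13 n (e x) k * v k)) ^ 2 := by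
          exact Finset.sum_congr rfl fun i _ => by rw [hAapp]
      _ ≤ ∑ i, (v i) ^ 2 := this
  have lip : ∀ x₁ x₂ : EuclideanSpace ℝ (Fin n), ‖F x₁ - F x₂‖ ≤ ‖x₁ - x₂‖ := by
    intro x₁ x₂
    have := Convex.norm_image_sub_le_of_norm_hasFDerivWithin_le
      (f := F) (f' := A) (s := Set.univ) (C := 1)
      (fun z _ => (hderiv z).hasFDerivWithinAt) (fun z _ => hbound z)
      convex_univ (Set.mem_univ x₂) (Set.mem_univ x₁)
    simpa using this
  have hmain := lip ((WithLp.equiv 2 _).symm y₁) ((WithLp.equiv 2 _).symm y₂)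
  rw [EuclideanSpace.norm_eq, EuclideanSpace.norm_eq] at hmain
  have h1 : ∀ i, (F ((WithLp.equiv 2 _).symm y₁) - F ((WithLp.equiv 2 _).symm y₂)) i
      = Real.exp (y₁ i) / ∑ k, Real.exp (y₁ k) - Real.exp (y₂ i) / ∑ k, Real.exp (y₂ k) := by
    intro i
    simp [hF, smax13, he]
  have h2 : ∀ i, ((WithLp.equiv 2 _).symm y₁ - (WithLp.equiv 2 _).symm y₂ :
      EuclideanSpace ℝ (Fin n)) i = y₁ i - y₂ i := fun i => rfl
  simp only [Real.norm_eq_abs, sq_abs] at hmain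
  calc Real.sqrt (∑ i, (Real.exp (y₁ i) / ∑ k, Real.exp (y₁ k) -
        Real.exp (y₂ i) / ∑ k, Real.exp (y₂ k)) ^ 2)
      = Real.sqrt (∑ i, ((F ((WithLp.equiv 2 _).symm y₁) - F ((WithLp.equiv 2 _).symm y₂)) i) ^ 2) := by
        simp only [h1]
    _ ≤ Real.sqrt (∑ i, (((WithLp.equiv 2 _).symm y₁ - (WithLp.equiv 2 _).symm y₂ :
          EuclideanSpace ℝ (Fin n)) i) ^ 2) := hmain
    _ = Real.sqrt (∑ i, (y₁ i - y₂ i) ^ 2) := by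
        simp only [h2]
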